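/- Let n ≥ 1, let L₁,…,Lₙ > 0, S > 0, t > 0, and let μ be the product on ℝⁿ of n copies of the exponential distribution with rate 1. Then the function P ↦ Pⁿ · μ{λ ∈ ℝⁿ : ∑_{i=1}^n Lᵢ·log₂(1 + S·λᵢ·P) < t} is monotone nondecreasing on (0, ∞); that is, for all 0 < P ≤ P′, Pⁿ · μ{λ : ∑ Lᵢ·log₂(1 + S·λᵢ·P) < t} ≤ (P′)ⁿ · μ{λ : ∑ Lᵢ·log₂(1 + S·λᵢ·P′) < t}. -/

import Mathlib

open MeasureTheory ProbabilityTheory Real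

-- monotonicity of Measure.pi
lemma my_pi_mono {n : ℕ} (ρ ρ' : Fin n → Measure ℝ)
    [∀ i, SigmaFinite (ρ i)] [∀ i, SigmaFinite (ρ' i)]
    (h : ∀ i, ρ i ≤ ρ' i) {s : Set (Fin n → ℝ)} (hs : MeasurableSet s) :
    Measure.pi ρ s ≤ Measure.pi ρ' s := by
  have h1 : (Measure.pi ρ).toOuterMeasure ≤
      MeasureTheory.OuterMeasure.pi fun i => (ρ' i).toOuterMeasure := by
    rw [MeasureTheory.OuterMeasure.le_pi]
    intro t _
    calc (Measure.pi ρ) (Set.pi Set.univ t) = ∏ i, ρ i (t i) := Measure.pi_pi ρ t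
    _ ≤ ∏ i, ρ' i (t i) := Finset.prod_le_prod' fun i _ => (h i) _
  calc Measure.pi ρ s ≤ (MeasureTheory.OuterMeasure.pi fun i => (ρ' i).toOuterMeasure) s := h1 s
  _ = Measure.pi ρ' s := by
      rw [Measure.pi_def, toMeasure_apply _ _ hs]

lemma my_onedim {P : ℝ} (hP : 0 < P) {s : Set ℝ} (hs : MeasurableSet s) :
    (ENNReal.ofReal P • (expMeasure 1).map (P * ·)) s
      = ∫⁻ y in s, gammaPDF 1 1 (P⁻¹ * y) ∂volume := by
  have hg : Measurable (gammaPDF 1 1) := (measurable_gammaPDFReal 1 1).ennreal_ofReal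
  have hmul : Measurable (P * · : ℝ → ℝ) := measurable_const_mul P
  have hpre : MeasurableSet ((P * ·) ⁻¹' s) := hmul hs
  set F : ℝ → ENNReal := s.indicator (fun y => gammaPDF 1 1 (P⁻¹ * y)) with hF
  have hFmeas : Measurable F := ((hg.comp (measurable_const_mul P⁻¹)).indicator hs)
  have key : ∀ x, ((P * ·) ⁻¹' s).indicator (gammaPDF 1 1) x = F (P * x) := by
    intro x
    by_cases hx : P * x ∈ s
    · simp [Set.indicator_of_mem, hx, hF, Set.indicator_of_mem (show P*x ∈ s from hx),
        inv_mul_cancel_left₀ (ne_of_gt hP)]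
    · simp [hF, Set.indicator_of_notMem, hx]
  rw [Measure.smul_apply, Measure.map_apply hmul hs, smul_eq_mul]
  show ENNReal.ofReal P * (volume.withDensity (gammaPDF 1 1)) ((P * ·) ⁻¹' s) = _
  rw [withDensity_apply _ hpre, ← lintegral_indicator hpre _]
  calc ENNReal.ofReal P * ∫⁻ x, ((P * ·) ⁻¹' s).indicator (gammaPDF 1 1) x ∂volume
      = ENNReal.ofReal P * ∫⁻ x, F (P * x) ∂volume := by simp_rw [key]
    _ = ENNReal.ofReal P * ∫⁻ y, F y ∂(volume.map (P * ·)) := by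
        rw [lintegral_map hFmeas hmul]
    _ = ENNReal.ofReal P * (ENNReal.ofReal |P⁻¹| * ∫⁻ y, F y ∂volume) := by
        rw [Real.map_volume_mul_left (ne_of_gt hP), lintegral_smul_measure, smul_eq_mul]
    _ = ∫⁻ y, F y ∂volume := by
        rw [← mul_assoc, abs_of_pos (inv_pos.mpr hP), ← ENNReal.ofReal_mul hP.le,
          mul_inv_cancel₀ (ne_of_gt hP), ENNReal.ofReal_one, one_mul]
    _ = ∫⁻ y in s, gammaPDF 1 1 (P⁻¹ * y) ∂volume := by rw [hF, lintegral_indicator hs _]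

lemma my_onedim_mono {P P' : ℝ} (hP : 0 < P) (hPP' : P ≤ P') :
    (ENNReal.ofReal P • (expMeasure 1).map (P * ·))
      ≤ (ENNReal.ofReal P' • (expMeasure 1).map (P' * ·)) := by
  have hP' : 0 < P' := lt_of_lt_of_le hP hPP'
  rw [Measure.le_iff]
  intro s hs
  rw [my_onedim hP hs, my_onedim hP' hs]
  refine lintegral_mono fun y => ?_
  rcases le_or_gt 0 y with hy | hy
  · rw [gammaPDF_of_nonneg (mul_nonneg (inv_pos.mpr hP).le hy),
      gammaPDF_of_nonneg (mul_nonneg (inv_pos.mpr hP').le hy)]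
    apply ENNReal.ofReal_le_ofReal
    simp only [Real.Gamma_one, Real.one_rpow, sub_self, Real.rpow_zero, one_mul, div_one]
    apply Real.exp_le_exp.mpr
    apply neg_le_neg
    exact mul_le_mul_of_nonneg_right (inv_anti₀ hP hPP') hy
  · rw [gammaPDF_of_neg (mul_neg_of_pos_of_neg (inv_pos.mpr hP) hy),
      gammaPDF_of_neg (mul_neg_of_pos_of_neg (inv_pos.mpr hP') hy)]

lemma my_map_pi {n : ℕ} {P : ℝ} (hP : 0 < P) :
    (Measure.pi fun _ : Fin n => expMeasure 1).map (fun lam i => P * lam i)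
      = Measure.pi fun _ : Fin n => (expMeasure 1).map (P * ·) := by
  have hprob : IsProbabilityMeasure (expMeasure 1) := isProbabilityMeasure_expMeasure one_pos
  have hmul : Measurable (P * · : ℝ → ℝ) := measurable_const_mul P
  haveI : IsProbabilityMeasure ((expMeasure 1).map (P * ·)) :=
    Measure.isProbabilityMeasure_map hmul.aemeasurable
  have hf : Measurable (fun lam : Fin n → ℝ => fun i => P * lam i) :=
    measurable_pi_lambda _ fun i => (measurable_pi_apply (X := fun _ : Fin n => ℝ) i).const_mul P
  refine (Measure.pi_eq fun s hs => ?_).symm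
  rw [Measure.map_apply hf (MeasurableSet.univ_pi hs)]
  have : (fun lam : Fin n → ℝ => fun i => P * lam i) ⁻¹' Set.pi Set.univ s
      = Set.pi Set.univ fun i => (P * ·) ⁻¹' s i := by
    ext lam; simp [Set.mem_pi]
  rw [this, Measure.pi_pi]
  exact Finset.prod_congr rfl fun i _ => (Measure.map_apply hmul (hs i)).symm

lemma my_pi_smul {n : ℕ} (c : ENNReal) (hc : c ≠ ⊤) (κ : Measure ℝ) [IsProbabilityMeasure κ] :
    (Measure.pi fun _ : Fin n => c • κ) = c ^ n • Measure.pi fun _ : Fin n => κ := by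
  haveI : IsFiniteMeasure (c • κ) :=
    ⟨by rw [Measure.smul_apply, smul_eq_mul]; exact ENNReal.mul_lt_top hc.lt_top (measure_lt_top _ _)⟩
  refine Measure.pi_eq fun s hs => ?_
  rw [Measure.smul_apply, Measure.pi_pi, smul_eq_mul]
  simp_rw [Measure.smul_apply, smul_eq_mul]
  rw [Finset.prod_mul_distrib, Finset.prod_const, Finset.card_univ, Fintype.card_fin]


theorem bound_monotone_in_P
    (n : ℕ) (hn : 1 ≤ n) (L : Fin n → ℝ) (hL : ∀ i, 0 < L i)
    (S t : ℝ) (hS : 0 < S) (ht : 0 < t)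
    (μ : Measure (Fin n → ℝ))
    (hμ : μ = Measure.pi fun _ : Fin n => expMeasure 1) :
    ∀ P P' : ℝ, 0 < P → P ≤ P' →
      ENNReal.ofReal (P ^ n) *
          μ {lam : Fin n → ℝ | ∑ i, L i * Real.logb 2 (1 + S * lam i * P) < t}
        ≤ ENNReal.ofReal (P' ^ n) *
          μ {lam : Fin n → ℝ | ∑ i, L i * Real.logb 2 (1 + S * lam i * P') < t} := by
  intro P P' hP hPP'
  have hP' : 0 < P' := lt_of_lt_of_le hP hPP'
  subst hμ
  haveI : IsProbabilityMeasure (expMeasure 1) := isProbabilityMeasure_expMeasure one_pos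
  set B : Set (Fin n → ℝ) := {u | ∑ i, L i * Real.logb 2 (1 + S * u i) < t} with hBdef
  have hB : MeasurableSet B := by
    have hFm : Measurable (fun u : Fin n → ℝ => ∑ i, L i * Real.logb 2 (1 + S * u i)) := by
      apply Finset.measurable_sum
      intro i _
      have h1 : Measurable (fun u : Fin n → ℝ => 1 + S * u i) :=
        ((measurable_pi_apply (X := fun _ : Fin n => ℝ) i).const_mul S).const_add 1
      exact ((Real.measurable_log.comp h1).div_const (Real.log 2)).const_mul (L i)
    exact measurableSet_lt hFm measurable_const
  have hset : ∀ Q : ℝ,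
      {lam : Fin n → ℝ | ∑ i, L i * Real.logb 2 (1 + S * lam i * Q) < t}
        = (fun lam i => Q * lam i) ⁻¹' B := by
    intro Q
    ext lam
    simp only [Set.mem_setOf_eq, Set.mem_preimage, hBdef]
    have : ∀ i, S * lam i * Q = S * (Q * lam i) := fun i => by ring
    simp_rw [this]
  have key : ∀ Q : ℝ, 0 < Q →
      ENNReal.ofReal (Q ^ n) *
        (Measure.pi fun _ : Fin n => expMeasure 1)
          {lam : Fin n → ℝ | ∑ i, L i * Real.logb 2 (1 + S * lam i * Q) < t}
      = (Measure.pi fun _ : Fin n => ENNReal.ofReal Q • (expMeasure 1).map (Q * ·)) B := by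
    intro Q hQ
    have hmul : Measurable (Q * · : ℝ → ℝ) := measurable_const_mul Q
    haveI : IsProbabilityMeasure ((expMeasure 1).map (Q * ·)) :=
      Measure.isProbabilityMeasure_map hmul.aemeasurable
    have hf : Measurable (fun lam : Fin n → ℝ => fun i => Q * lam i) :=
      measurable_pi_lambda _ fun i => (measurable_pi_apply (X := fun _ : Fin n => ℝ) i).const_mul Q
    rw [hset Q, ← Measure.map_apply hf hB, my_map_pi hQ,
      my_pi_smul (ENNReal.ofReal Q) ENNReal.ofReal_ne_top, Measure.smul_apply, smul_eq_mul,
      ← ENNReal.ofReal_pow hQ.le]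
  rw [key P hP, key P' hP']
  have hmulP : Measurable (P * · : ℝ → ℝ) := measurable_const_mul P
  have hmulP' : Measurable (P' * · : ℝ → ℝ) := measurable_const_mul P'
  haveI : IsProbabilityMeasure ((expMeasure 1).map (P * ·)) :=
    Measure.isProbabilityMeasure_map hmulP.aemeasurable
  haveI : IsProbabilityMeasure ((expMeasure 1).map (P' * ·)) :=
    Measure.isProbabilityMeasure_map hmulP'.aemeasurable
  haveI h1 : IsFiniteMeasure (ENNReal.ofReal P • (expMeasure 1).map (P * ·)) :=
    ⟨by rw [Measure.smul_apply, smul_eq_mul]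
        exact ENNReal.mul_lt_top ENNReal.ofReal_lt_top (measure_lt_top _ _)⟩
  haveI h2 : IsFiniteMeasure (ENNReal.ofReal P' • (expMeasure 1).map (P' * ·)) :=
    ⟨by rw [Measure.smul_apply, smul_eq_mul]
        exact ENNReal.mul_lt_top ENNReal.ofReal_lt_top (measure_lt_top _ _)⟩
  exact my_pi_mono _ _ (fun _ => my_onedim_mono hP hPP') hB
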